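/- Let n ≥ 2 and m ≥ 1 be integers and let X be an n×m Latin hypercube design. Then the minimum over all pairs of distinct rows x_i, x_j of the squared L2-distance Σ_{k=1}^m (x_{ik} − x_{jk})² is at most ⌊n(n+1)m/6⌋. -/

import Mathlib

open Finset

lemma gauss2 (n : ℕ) : 2 * ∑ a ∈ range n, (a:ℤ) = n * (n-1) := by
  induction n with
  | zero => simp
  | succ k ih => rw [Finset.sum_range_succ]; push_cast at ih ⊢; ring_nf; ring_nf at ih; linarith

lemma sq6 (n : ℕ) : 6 * ∑ a ∈ range n, (a:ℤ)^2 = n * (n-1) * (2*n-1) := by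
  induction n with
  | zero => simp
  | succ k ih => rw [Finset.sum_range_succ]; push_cast at ih ⊢; ring_nf; ring_nf at ih; linarith

lemma Tkey (n : ℕ) : 6 * ∑ a ∈ range n, ∑ b ∈ range n, ((a:ℤ)-b)^2 = n^2 * (n^2-1) := by
  have h : ∀ a b : ℤ, (a-b)^2 = a^2 + b^2 - 2*(a*b) := fun a b => by ring
  simp_rw [h, Finset.sum_sub_distrib, Finset.sum_add_distrib, Finset.sum_const, ← Finset.mul_sum,
    ← Finset.sum_mul, Finset.card_range, nsmul_eq_mul]
  have g := gauss2 n
  have s := sq6 n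
  rw [← Finset.mul_sum]
  nlinarith [g, s]

lemma TkeyIcc (n : ℕ) : 6 * ∑ a ∈ Icc 1 n, ∑ b ∈ Icc 1 n, ((a:ℤ)-b)^2 = n^2 * (n^2-1) := by
  rw [← Tkey n]
  congr 1
  rw [← Finset.Ico_add_one_right_eq_Icc, Finset.sum_Ico_eq_sum_range]
  refine Finset.sum_congr (by norm_num) fun a _ => ?_
  rw [Finset.sum_Ico_eq_sum_range]
  refine Finset.sum_congr (by norm_num) fun b _ => ?_
  push_cast; ring



/-- For an `n × m` Latin hypercube design (every column is a permutation
of `{1,…,n}`) with `n ≥ 2`, `m ≥ 1`, the minimum pairwise squared `L2`-distance is at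
most `⌊n(n+1)m/6⌋`, i.e. some pair of distinct rows has squared `L2`-distance at most
`n*(n+1)*m/6`. -/
theorem stmt_1 (n m : ℕ) (hn : 2 ≤ n) (hm : 1 ≤ m)
    (X : Fin n → Fin m → ℕ)
    (hX : ∀ j : Fin m, Finset.image (fun i => X i j) Finset.univ = Finset.Icc 1 n) :
    ∃ i i' : Fin n, i ≠ i' ∧
      (∑ k : Fin m, ((X i k : ℤ) - (X i' k : ℤ)).natAbs ^ 2) ≤ n * (n + 1) * m / 6 := by
  set D : Fin n × Fin n → ℕ := fun p => ∑ k : Fin m, ((X p.1 k : ℤ) - (X p.2 k : ℤ)).natAbs ^ 2 with hD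
  have hinj : ∀ j : Fin m, Set.InjOn (fun i => X i j) (Finset.univ : Finset (Fin n)) := by
    intro j
    rw [← Finset.card_image_iff, hX j, Nat.card_Icc]
    simp
  -- column sums
  have hcol : ∀ j : Fin m, ∑ i : Fin n, ∑ i' : Fin n, ((X i j : ℤ) - (X i' j : ℤ))^2
      = ∑ a ∈ Icc 1 n, ∑ b ∈ Icc 1 n, ((a:ℤ)-b)^2 := by
    intro j
    have hs : ∀ g : ℕ → ℤ, ∑ i' : Fin n, g (X i' j) = ∑ b ∈ Icc 1 n, g b := by
      intro g
      rw [← hX j, Finset.sum_image (hinj j)]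
    rw [← hs (fun a => ∑ b ∈ Icc 1 n, ((a:ℤ) - b)^2)]
    exact Finset.sum_congr rfl fun i _ => hs (fun b => ((X i j : ℤ) - b)^2)
  -- total sum over all ordered pairs
  have htot : 6 * ∑ i : Fin n, ∑ i' : Fin n, (D (i, i') : ℤ) = m * (n^2 * (n^2 - 1)) := by
    have hc : ∀ i i' : Fin n, (D (i,i') : ℤ) = ∑ k : Fin m, ((X i k : ℤ) - (X i' k : ℤ))^2 := by
      intro i i'
      rw [hD, Nat.cast_sum]
      exact Finset.sum_congr rfl fun k _ => by rw [Nat.cast_pow, Int.natAbs_sq]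
    simp_rw [hc]
    have swap : ∑ i : Fin n, ∑ i' : Fin n, ∑ k : Fin m, ((X i k : ℤ) - (X i' k : ℤ))^2
        = ∑ k : Fin m, ∑ i : Fin n, ∑ i' : Fin n, ((X i k : ℤ) - (X i' k : ℤ))^2 := by
      rw [show (∑ i : Fin n, ∑ i' : Fin n, ∑ k : Fin m, ((X i k : ℤ) - (X i' k : ℤ))^2)
          = ∑ i : Fin n, ∑ k : Fin m, ∑ i' : Fin n, ((X i k : ℤ) - (X i' k : ℤ))^2
        from Finset.sum_congr rfl fun i _ => Finset.sum_comm]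
      exact Finset.sum_comm
    rw [swap]
    simp_rw [hcol]
    rw [Finset.sum_const, Finset.card_univ, Fintype.card_fin, nsmul_eq_mul]
    linear_combination (m:ℤ) * TkeyIcc n
  -- pick the minimizing off-diagonal pair
  have hne : (Finset.univ.filter (fun p : Fin n × Fin n => p.1 ≠ p.2)).Nonempty := by
    refine ⟨(⟨0, by omega⟩, ⟨1, by omega⟩), ?_⟩
    simp [Finset.mem_filter, Fin.ext_iff]
  obtain ⟨p, hp, hmin⟩ := Finset.exists_min_image _ D hne
  rw [Finset.mem_filter] at hp
  refine ⟨p.1, p.2, hp.2, ?_⟩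
  have hdiag : ∀ i : Fin n, D (i, i) = 0 := by intro i; simp [hD]
  have hfull : ∑ q ∈ Finset.univ.filter (fun p : Fin n × Fin n => p.1 ≠ p.2), D q
      = ∑ i : Fin n, ∑ i' : Fin n, D (i, i') := by
    rw [Finset.sum_filter_of_ne (fun q _ hq => ?_)]
    · exact Fintype.sum_prod_type D
    · by_contra hc
      have hqq : q = (q.1, q.1) := Prod.ext rfl hc.symm
      exact hq (by rw [hqq, hdiag])
  have hcard : (Finset.univ.filter (fun p : Fin n × Fin n => p.1 ≠ p.2)).card = n * n - n := by
    have : (Finset.univ.filter (fun p : Fin n × Fin n => p.1 ≠ p.2))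
        = (Finset.univ : Finset (Fin n)).offDiag := by
      ext q; simp [Finset.mem_offDiag]
    rw [this, Finset.offDiag_card, Finset.card_univ, Fintype.card_fin]
  have hlb : (n * n - n) * D p ≤ ∑ i : Fin n, ∑ i' : Fin n, D (i, i') := by
    have h := Finset.card_nsmul_le_sum
      (Finset.univ.filter (fun p : Fin n × Fin n => p.1 ≠ p.2)) D (D p) (fun q hq => hmin q hq)
    rw [hcard, smul_eq_mul, hfull] at h
    exact h
  -- conclude
  have h6 : 6 * D p ≤ m * (n^2 + n) := by
    have hcast : ((∑ i : Fin n, ∑ i' : Fin n, D (i, i') : ℕ) : ℤ)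
        = ∑ i : Fin n, ∑ i' : Fin n, (D (i, i') : ℤ) := by push_cast; rfl
    have h1 : ((n * n - n : ℕ) : ℤ) * (D p : ℤ) ≤ ∑ i : Fin n, ∑ i' : Fin n, (D (i, i') : ℤ) := by
      rw [← hcast]; exact_mod_cast hlb
    have h2 : ((n * n - n : ℕ) : ℤ) = (n:ℤ) * n - n := by
      have hnn : n ≤ n * n := Nat.le_mul_of_pos_left n (by omega)
      push_cast [Nat.cast_sub hnn]; ring
    rw [h2] at h1
    have hz : ((n:ℤ) * n - n) * (6 * (D p : ℤ)) ≤ ((n:ℤ) * n - n) * (m * ((n:ℤ)^2 + n)) := by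
      nlinarith [h1, htot]
    have hpos : (0:ℤ) < (n:ℤ) * n - n := by
      have : (2:ℤ) ≤ n := by exact_mod_cast hn
      nlinarith
    have := le_of_mul_le_mul_left hz hpos
    exact_mod_cast this
  rw [Nat.le_div_iff_mul_le (by norm_num : 0 < 6)]
  have : D p * 6 ≤ m * (n^2 + n) := by omega
  calc (∑ k : Fin m, ((X p.1 k : ℤ) - (X p.2 k : ℤ)).natAbs ^ 2) * 6 = D p * 6 := rfl
    _ ≤ m * (n^2 + n) := this
    _ = n * (n+1) * m := by ring
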